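/- Let G be a real symmetric d×d matrix with 0 ⪯ G ⪯ (1−κ)·I, 0 < κ < 1, let r₀ ∈ ℝ^d, and let R ∈ ℝ^{d×N} be the matrix whose j-th column is p_{j−1}(G)·r₀ for j = 1,…,N, where each p_j is a real polynomial of degree exactly j with p_j(1) = 1 (and p_0 = 1). If R has full column rank, then RᵀR is positive definite, 1ᵀ(RᵀR)⁻¹1 > 0, and the last coordinate of the vector c = (RᵀR)⁻¹1 / (1ᵀ(RᵀR)⁻¹1) is nonzero. -/

import Mathlib

open Matrix Polynomial

noncomputable def vecNorm {n : ℕ} (v : Fin n → ℝ) : ℝ := Real.sqrt (∑ i, v i ^ 2)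

/-- Any polynomial of degree `< n` is a linear combination of `p 0, …, p (n-1)` when
`p j` has degree exactly `j`. -/
lemma rep_lemma : ∀ (n : ℕ) (p : ℕ → Polynomial ℝ),
    (∀ j, j < n → (p j).degree = (j : ℕ)) →
    ∀ q : Polynomial ℝ, q.degree < (n : ℕ) → ∃ a : Fin n → ℝ, q = ∑ j, a j • p (j : ℕ) := by
  intro n
  induction n with
  | zero =>
    intro p _ q hq
    refine ⟨0, ?_⟩
    have : q = 0 := by
      rw [← Polynomial.degree_eq_bot]
      exact Nat.WithBot.lt_zero_iff.mp (by exact_mod_cast hq)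
    simp [this]
  | succ n ih =>
    intro p hdeg q hq
    have hpn : (p n).degree = (n : ℕ) := hdeg n (Nat.lt_succ_self n)
    have hpn0 : (p n) ≠ 0 := fun h => by simp [h] at hpn
    have hlc : (p n).coeff n ≠ 0 := by
      have : (p n).natDegree = n := natDegree_eq_of_degree_eq_some hpn
      have h := Polynomial.leadingCoeff_ne_zero.mpr hpn0
      rwa [Polynomial.leadingCoeff, this] at h
    set c := q.coeff n / (p n).coeff n with hc
    have hq' : (q - C c * p n).degree < (n : ℕ) := by
      rw [Polynomial.degree_lt_iff_coeff_zero]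
      intro m hm
      rcases eq_or_lt_of_le hm with hmn | hmn
      · subst hmn
        simp only [coeff_sub, coeff_C_mul, hc]
        field_simp
        simp
      · have h1 : q.coeff m = 0 :=
          coeff_eq_zero_of_degree_lt (lt_of_lt_of_le hq (by exact_mod_cast hmn))
        have h2 : (p n).coeff m = 0 :=
          coeff_eq_zero_of_degree_lt (by rw [hpn]; exact_mod_cast hmn)
        simp [h1, h2]
    obtain ⟨a, ha⟩ := ih p (fun j hj => hdeg j (hj.trans (Nat.lt_succ_self n))) _ hq'
    refine ⟨Fin.snoc a c, ?_⟩
    rw [Fin.sum_univ_castSucc]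
    simp only [Fin.snoc_castSucc, Fin.snoc_last, Fin.coe_castSucc, Fin.val_last]
    rw [← ha, Polynomial.smul_eq_C_mul]
    ring

/-- if the columns of `R` are `p_{j−1}(G)r₀` with `p_j` of degree exactly `j` and
`p_j(1) = 1`, and `R` has full column rank, then `RᵀR` is positive definite, `1ᵀ(RᵀR)⁻¹1 > 0`,
and the last coordinate of `c = (RᵀR)⁻¹1/(1ᵀ(RᵀR)⁻¹1)` is nonzero. -/
theorem anderson_last_weight_nonzero
    (d N : ℕ) (hN : 1 ≤ N) (κ : ℝ) (hκ0 : 0 < κ) (hκ1 : κ < 1)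
    (G : Matrix (Fin d) (Fin d) ℝ)
    (hGpsd : G.PosSemidef)
    (hGub : ((1 - κ) • (1 : Matrix (Fin d) (Fin d) ℝ) - G).PosSemidef)
    (r0 : Fin d → ℝ)
    (p : ℕ → Polynomial ℝ)
    (hpdeg : ∀ j : Fin N, (p j).degree = ((j : ℕ) : WithBot ℕ))
    (hp1 : ∀ j : Fin N, (p j).eval 1 = 1)
    (R : Matrix (Fin d) (Fin N) ℝ)
    (hR : ∀ j : Fin N, (fun r => R r j) = (Polynomial.aeval G (p (j : ℕ))).mulVec r0)
    (hrank : R.rank = N) :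
    (Rᵀ * R).PosDef ∧
    0 < ∑ j, (Rᵀ * R)⁻¹.mulVec (fun _ => (1 : ℝ)) j ∧
    ((∑ j, (Rᵀ * R)⁻¹.mulVec (fun _ => (1 : ℝ)) j)⁻¹ •
        (Rᵀ * R)⁻¹.mulVec (fun _ => (1 : ℝ))) ⟨N - 1, by omega⟩ ≠ 0 := by
  classical
  set A := Rᵀ * R with hAdef
  -- injectivity of `R.mulVec` from full column rank
  have hfinrank : Module.finrank ℝ ↥(LinearMap.range R.mulVecLin) = N := hrank
  have hker : LinearMap.ker R.mulVecLin = ⊥ := by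
    have h := LinearMap.finrank_range_add_finrank_ker
      (R.mulVecLin : (Fin N → ℝ) →ₗ[ℝ] (Fin d → ℝ))
    rw [hfinrank, Module.finrank_fin_fun] at h
    have h0 : Module.finrank ℝ ↥(LinearMap.ker R.mulVecLin) = 0 := by omega
    exact Submodule.finrank_eq_zero.mp h0
  have hinj : Function.Injective R.mulVec := by
    rw [← Matrix.coe_mulVecLin]
    exact LinearMap.ker_eq_bot.mp hker
  have hsq : ∀ x : Fin N → ℝ, x ≠ 0 → 0 < (R *ᵥ x) ⬝ᵥ (R *ᵥ x) := by
    intro x hx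
    have hxne : R *ᵥ x ≠ 0 := fun h => hx (hinj (by simpa using h))
    have h0 : 0 ≤ (R *ᵥ x) ⬝ᵥ (R *ᵥ x) :=
      Finset.sum_nonneg fun i _ => mul_self_nonneg _
    rcases h0.lt_or_eq with h | h
    · exact h
    · exact absurd (dotProduct_self_eq_zero.mp h.symm) hxne
  have hquad : ∀ x y : Fin N → ℝ, x ⬝ᵥ (A *ᵥ y) = (R *ᵥ x) ⬝ᵥ (R *ᵥ y) := by
    intro x y
    rw [hAdef, ← Matrix.mulVec_mulVec, Matrix.dotProduct_mulVec, Matrix.vecMul_transpose]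
  have hApd : A.PosDef := by
    refine Matrix.PosDef.of_dotProduct_mulVec_pos
      (by simpa using Matrix.isHermitian_conjTranspose_mul_self R) fun x hx => ?_
    have hst : star x = x := by simp
    rw [hst, hquad]
    exact hsq x hx
  have hAuInv : A * A⁻¹ = 1 := Matrix.mul_nonsing_inv A hApd.det_pos.ne'.isUnit
  set ones : Fin N → ℝ := fun _ => (1 : ℝ) with hones
  set w := A⁻¹ *ᵥ ones with hw
  have hAw : A *ᵥ w = ones := by
    rw [hw, Matrix.mulVec_mulVec, hAuInv, Matrix.one_mulVec]
  have honesne : ones ≠ 0 := by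
    intro h
    have := congrFun h ⟨0, by omega⟩
    simp [hones] at this
  have hsum : 0 < ∑ j, w j := by
    have h := (hApd.inv).dotProduct_mulVec_pos honesne
    have hst : star ones = ones := by simp
    rw [hst, ← hw] at h
    simpa [dotProduct, hones] using h
  refine ⟨hApd, hsum, ?_⟩
  set ℓ : Fin N := ⟨N - 1, by omega⟩ with hℓ
  -- linear combinations of columns of R
  have hcomb : ∀ a : Fin N → ℝ,
      R *ᵥ a = (aeval G (∑ j : Fin N, a j • p (j : ℕ))) *ᵥ r0 := by
    intro a
    rw [map_sum]
    funext i
    have hsmul : ∀ j : Fin N, (aeval G (a j • p (j : ℕ))) = a j • (aeval G (p (j : ℕ))) :=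
      fun j => map_smul _ _ _
    have hRij : ∀ (j : Fin N) (i : Fin d), R i j = ((aeval G (p (j : ℕ))) *ᵥ r0) i :=
      fun j i => congrFun (hR j) i
    simp only [hsmul, Matrix.mulVec, dotProduct, Matrix.sum_apply, Matrix.smul_apply,
      smul_eq_mul, Finset.sum_mul]
    rw [Finset.sum_comm]
    refine Finset.sum_congr rfl fun j _ => ?_
    rw [hRij j i]
    simp only [Matrix.mulVec, dotProduct, Finset.sum_mul]
    refine Finset.sum_congr rfl fun k _ => by ring
  have hwℓ : w ℓ ≠ 0 := by
    intro hwl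
    set P := ∑ j : Fin N, w j • p (j : ℕ) with hPdef
    set Q := (X - 1) * P with hQdef
    set v := (aeval G P) *ᵥ r0 with hvdef
    have hvRw : R *ᵥ w = v := hcomb w
    have hQdeg : Q.degree < ((N : ℕ) : WithBot ℕ) := by
      have hQsum : Q = ∑ j : Fin N, w j • ((X - 1) * p (j : ℕ)) := by
        rw [hQdef, hPdef, Finset.mul_sum]
        exact Finset.sum_congr rfl fun j _ => (mul_smul_comm _ _ _)
      rw [hQsum]
      refine lt_of_le_of_lt (Polynomial.degree_sum_le _ _) ?_
      rw [Finset.sup_lt_iff (by exact_mod_cast (WithBot.bot_lt_coe N))]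
      intro j _
      by_cases hj : j = ℓ
      · subst hj
        rw [hwl, zero_smul, Polynomial.degree_zero]
        exact_mod_cast WithBot.bot_lt_coe N
      · refine lt_of_le_of_lt (Polynomial.degree_smul_le _ _) ?_
        refine lt_of_le_of_lt (Polynomial.degree_mul_le _ _) ?_
        have hX1 : (X - 1 : Polynomial ℝ).degree = 1 := by
          rw [← Polynomial.C_1]; exact Polynomial.degree_X_sub_C 1
        rw [hX1, hpdeg j]
        have hne : (j : ℕ) ≠ N - 1 := fun h => hj (Fin.ext (by simp [hℓ, h]))
        have hjlt : 1 + (j : ℕ) < N := by have := j.isLt; omega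
        exact_mod_cast hjlt
    obtain ⟨a, haQ⟩ := rep_lemma N p (fun j hj => hpdeg ⟨j, hj⟩) Q hQdeg
    have hasum : ∑ j : Fin N, a j = 0 := by
      have h1 : Q.eval 1 = 0 := by rw [hQdef]; simp
      have h2 : Q.eval 1 = ∑ j : Fin N, a j := by
        rw [haQ, Polynomial.eval_finset_sum]
        refine Finset.sum_congr rfl fun j _ => ?_
        rw [Polynomial.eval_smul, hp1 j, smul_eq_mul, mul_one]
      rw [h1] at h2; exact h2.symm
    have hRa : R *ᵥ a = (G - 1) *ᵥ v := by
      rw [hcomb a, ← haQ, hQdef, _root_.map_mul]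
      have hX1 : aeval G (X - 1 : Polynomial ℝ) = G - 1 := by simp
      rw [hX1, ← Matrix.mulVec_mulVec, hvdef]
    have hortho : ((G - 1) *ᵥ v) ⬝ᵥ v = 0 := by
      have h := hquad a w
      rw [hAw, hRa, hvRw] at h
      rw [← h]
      simpa [dotProduct, hones] using hasum
    have hkey : v ⬝ᵥ (((1 : Matrix (Fin d) (Fin d) ℝ) - G) *ᵥ v) = 0 := by
      rw [show (1 : Matrix (Fin d) (Fin d) ℝ) - G = -(G - 1) from (neg_sub _ _).symm,
        Matrix.neg_mulVec, dotProduct_neg, dotProduct_comm, hortho, neg_zero]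
    have hsplit : v ⬝ᵥ (((1 : Matrix (Fin d) (Fin d) ℝ) - G) *ᵥ v)
        = v ⬝ᵥ (((1 - κ) • (1 : Matrix (Fin d) (Fin d) ℝ) - G) *ᵥ v) + κ * (v ⬝ᵥ v) := by
      have hone : (1 - κ) • (1 : Matrix (Fin d) (Fin d) ℝ) + κ • 1 = 1 := by
        rw [← add_smul]; simp
      have hmat : (1 : Matrix (Fin d) (Fin d) ℝ) - G
          = ((1 - κ) • (1 : Matrix (Fin d) (Fin d) ℝ) - G) + κ • 1 := by
        rw [sub_add_eq_add_sub, hone]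
      rw [hmat, Matrix.add_mulVec, dotProduct_add, Matrix.smul_mulVec,
        Matrix.one_mulVec, dotProduct_smul, smul_eq_mul]
    have hub : 0 ≤ v ⬝ᵥ (((1 - κ) • (1 : Matrix (Fin d) (Fin d) ℝ) - G) *ᵥ v) := by
      have h := hGub.dotProduct_mulVec_nonneg v
      simpa using h
    have hvvnn : 0 ≤ v ⬝ᵥ v := Finset.sum_nonneg fun i _ => mul_self_nonneg _
    have hvv0 : v ⬝ᵥ v = 0 := by nlinarith [hkey, hsplit, hub, hvvnn, hκ0]
    have hcontra : w ⬝ᵥ ones = 0 := by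
      rw [← hAw, hquad w w, hvRw, hvv0]
    have hzero : ∑ j, w j = 0 := by simpa [dotProduct, hones] using hcontra
    exact absurd hzero hsum.ne'
  have hsne : (∑ j, w j)⁻¹ ≠ 0 := inv_ne_zero hsum.ne'
  simp only [Pi.smul_apply, smul_eq_mul]
  exact mul_ne_zero hsne hwℓ
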